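/- Let q = 0, u ∈ [0,1), i ≥ 1 fixed, α > 0, p = α/K. Then I₂ = Θ((log K)/K); precisely, α·e^{-α}·i·(1-u)/ln 2 ≤ liminf_{K→∞} (K/ln K)·I₂ and limsup_{K→∞} (K/ln K)·I₂ ≤ α·e^{-α(1-u²)}·i·(1-u)/ln 2. -/

import Mathlib

open Filter

/-- The error term I₂ in the q = 0 case (series index j ≥ 2 as j = m + 2). -/
noncomputable def I2q0 (K i : ℕ) (p u : ℝ) : ℝ :=
  (1 / Real.log 2) *
    ∑' m : ℕ,
      (1 : ℝ) / ((m + 2) * (m + 1)) *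
        (1 - p + p * u ^ (m + 2)) ^ K *
        (1 - ((1 - p + p * u) ^ (m + 2) / (1 - p + p * u ^ (m + 2))) ^ i)

private lemma jensen_pow (p u : ℝ) (hp0 : 0 ≤ p) (hp1 : p ≤ 1) (hu0 : 0 ≤ u) (j : ℕ) :
    (1 - p + p*u)^j ≤ 1 - p + p*u^j := by
  have h := (convexOn_pow (𝕜 := ℝ) j).2 (Set.mem_Ici.mpr zero_le_one) (Set.mem_Ici.mpr hu0)
    (by linarith : (0:ℝ) ≤ 1 - p) hp0 (by ring)
  simp only [smul_eq_mul, mul_one, one_pow] at h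
  calc (1 - p + p*u)^j = ((1-p)*1 + p*u)^j := by ring_nf
    _ ≤ (1-p) + p*u^j := by simpa using h
    _ = 1 - p + p*u^j := by ring

private lemma quad_upper (x : ℝ) (h0 : 0 ≤ x) (h1 : x ≤ 1) :
    ∀ j : ℕ, (1 - x)^j ≤ 1 - (j:ℝ)*x + ((j:ℝ)*((j:ℝ)-1))/2 * x^2 := by
  intro j
  induction j with
  | zero => norm_num
  | succ j ih =>
    have hj : (0:ℝ) ≤ j := Nat.cast_nonneg j
    have hjj : (0:ℝ) ≤ (j:ℝ)*((j:ℝ)-1) := by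
      rcases Nat.eq_zero_or_pos j with h | h
      · simp [h]
      · have : (1:ℝ) ≤ j := by exact_mod_cast h
        nlinarith
    have h3 : (1-x)^(j+1) ≤ (1 - (j:ℝ)*x + ((j:ℝ)*((j:ℝ)-1))/2 * x^2) * (1-x) := by
      rw [pow_succ]
      exact mul_le_mul_of_nonneg_right ih (by linarith)
    push_cast
    nlinarith [mul_nonneg hjj (mul_nonneg (mul_nonneg h0 h0) h0)]

private lemma geom_lower (r : ℝ) (h0 : 0 ≤ r) (h1 : r ≤ 1) :
    ∀ n : ℕ, ((n:ℝ)+1) * r^n * (1-r) ≤ 1 - r^(n+1) := by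
  intro n
  induction n with
  | zero => simp
  | succ n ih =>
    have hrn : r^(n+1) ≤ r^n := pow_le_pow_of_le_one h0 h1 (Nat.le_succ n)
    have h2 : ((n:ℝ)+1) * r^(n+1) * (1-r) ≤ ((n:ℝ)+1) * r^n * (1-r) :=
      mul_le_mul_of_nonneg_right (mul_le_mul_of_nonneg_left hrn (by positivity)) (by linarith)
    have h3 : (1:ℝ) - r^(n+2) = (1 - r^(n+1)) + r^(n+1)*(1-r) := by ring
    have h4 : 0 ≤ r^(n+1)*(1-r) := mul_nonneg (pow_nonneg h0 _) (by linarith)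
    push_cast
    nlinarith

section terms
variable (p u : ℝ) (K m : ℕ) (hp0 : 0 < p) (hp2 : p ≤ 1/2) (hu0 : 0 ≤ u) (hu1 : u < 1)
include hp0 hp2 hu0 hu1

private lemma term_nonneg (i : ℕ) :
    0 ≤ (1:ℝ) / (((m:ℝ) + 2) * ((m:ℝ) + 1)) * (1 - p + p * u ^ (m + 2)) ^ K *
        (1 - ((1 - p + p * u) ^ (m + 2) / (1 - p + p * u ^ (m + 2))) ^ i) := by
  have hup : (0:ℝ) ≤ u ^ (m+2) := pow_nonneg hu0 _
  have hD0 : (0:ℝ) < 1 - p + p*u^(m+2) := by nlinarith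
  have hD1 : 1 - p + p*u^(m+2) ≤ 1 := by nlinarith [pow_le_one₀ hu0 hu1.le (n := m+2)]
  have hN0 : (0:ℝ) ≤ (1-p+p*u)^(m+2) := pow_nonneg (by nlinarith) _
  have hND : (1-p+p*u)^(m+2) ≤ 1 - p + p*u^(m+2) :=
    jensen_pow p u hp0.le (by linarith) hu0 _
  have hr0 : 0 ≤ (1-p+p*u)^(m+2)/(1-p+p*u^(m+2)) := div_nonneg hN0 hD0.le
  have hr1 : (1-p+p*u)^(m+2)/(1-p+p*u^(m+2)) ≤ 1 := (div_le_one hD0).mpr hND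
  have h1 : ((1-p+p*u)^(m+2)/(1-p+p*u^(m+2)))^i ≤ 1 := pow_le_one₀ hr0 hr1
  have h2 : (0:ℝ) ≤ (1 - p + p * u ^ (m + 2)) ^ K := pow_nonneg hD0.le _
  have h3 : (0:ℝ) ≤ 1 / (((m:ℝ) + 2) * ((m:ℝ) + 1)) := by positivity
  exact mul_nonneg (mul_nonneg h3 h2) (by linarith)

private lemma term_le_triv (i : ℕ) :
    (1:ℝ) / (((m:ℝ) + 2) * ((m:ℝ) + 1)) * (1 - p + p * u ^ (m + 2)) ^ K *
        (1 - ((1 - p + p * u) ^ (m + 2) / (1 - p + p * u ^ (m + 2))) ^ i)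
      ≤ (1:ℝ) / (((m:ℝ) + 2) * ((m:ℝ) + 1)) := by
  have hup : (0:ℝ) ≤ u ^ (m+2) := pow_nonneg hu0 _
  have hD0 : (0:ℝ) < 1 - p + p*u^(m+2) := by nlinarith
  have hD1 : 1 - p + p*u^(m+2) ≤ 1 := by nlinarith [pow_le_one₀ hu0 hu1.le (n := m+2)]
  have hN0 : (0:ℝ) ≤ (1-p+p*u)^(m+2) := pow_nonneg (by nlinarith) _
  have hr0 : 0 ≤ (1-p+p*u)^(m+2)/(1-p+p*u^(m+2)) := div_nonneg hN0 hD0.le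
  have hri : (0:ℝ) ≤ ((1-p+p*u)^(m+2)/(1-p+p*u^(m+2)))^i := pow_nonneg hr0 _
  have hDK : (1 - p + p * u ^ (m + 2)) ^ K ≤ 1 := pow_le_one₀ hD0.le hD1
  have h2 : (0:ℝ) ≤ (1 - p + p * u ^ (m + 2)) ^ K := pow_nonneg hD0.le _
  have h3 : (0:ℝ) ≤ 1 / (((m:ℝ) + 2) * ((m:ℝ) + 1)) := by positivity
  have key : (1 - p + p * u ^ (m + 2)) ^ K *
      (1 - ((1 - p + p * u) ^ (m + 2) / (1 - p + p * u ^ (m + 2))) ^ i) ≤ 1 := by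
    nlinarith
  calc (1:ℝ) / (((m:ℝ) + 2) * ((m:ℝ) + 1)) * (1 - p + p * u ^ (m + 2)) ^ K *
        (1 - ((1 - p + p * u) ^ (m + 2) / (1 - p + p * u ^ (m + 2))) ^ i)
      = (1:ℝ) / (((m:ℝ) + 2) * ((m:ℝ) + 1)) * ((1 - p + p * u ^ (m + 2)) ^ K *
        (1 - ((1 - p + p * u) ^ (m + 2) / (1 - p + p * u ^ (m + 2))) ^ i)) := by ring
    _ ≤ (1:ℝ) / (((m:ℝ) + 2) * ((m:ℝ) + 1)) * 1 := mul_le_mul_of_nonneg_left key h3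
    _ = (1:ℝ) / (((m:ℝ) + 2) * ((m:ℝ) + 1)) := mul_one _

private lemma term_upper (i : ℕ) :
    (1:ℝ) / (((m:ℝ) + 2) * ((m:ℝ) + 1)) * (1 - p + p * u ^ (m + 2)) ^ K *
        (1 - ((1 - p + p * u) ^ (m + 2) / (1 - p + p * u ^ (m + 2))) ^ i)
      ≤ (1 - p*(1-u^2))^K * ((i:ℝ)*(p*(1-u))/((m:ℝ)+1)) := by
  have hup : (0:ℝ) ≤ u ^ (m+2) := pow_nonneg hu0 _
  have hD0 : (0:ℝ) < 1 - p + p*u^(m+2) := by nlinarith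
  have hD1 : 1 - p + p*u^(m+2) ≤ 1 := by nlinarith [pow_le_one₀ hu0 hu1.le (n := m+2)]
  have hN0 : (0:ℝ) ≤ (1-p+p*u)^(m+2) := pow_nonneg (by nlinarith) _
  have hND : (1-p+p*u)^(m+2) ≤ 1 - p + p*u^(m+2) :=
    jensen_pow p u hp0.le (by linarith) hu0 _
  set r : ℝ := (1-p+p*u)^(m+2)/(1-p+p*u^(m+2)) with hrdef
  have hr0 : 0 ≤ r := div_nonneg hN0 hD0.le
  have hr1 : r ≤ 1 := (div_le_one hD0).mpr hND
  -- r ≥ N since D ≤ 1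
  have hrN : (1-p+p*u)^(m+2) ≤ r := by
    rw [hrdef]
    calc (1-p+p*u)^(m+2) = (1-p+p*u)^(m+2)/1 := (div_one _).symm
      _ ≤ (1-p+p*u)^(m+2)/(1-p+p*u^(m+2)) := div_le_div_of_nonneg_left hN0 hD0 hD1
  -- Bernoulli lower bound on N
  have hNlow : 1 - ((m:ℝ)+2)*(p*(1-u)) ≤ (1-p+p*u)^(m+2) := by
    have h := one_add_mul_le_pow (a := -(p*(1-u))) (by nlinarith) (m+2)
    have e1 : (1:ℝ) + -(p*(1-u)) = 1-p+p*u := by ring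
    rw [e1] at h
    calc 1 - ((m:ℝ)+2)*(p*(1-u)) = 1 + ((m+2 : ℕ):ℝ) * (-(p*(1-u))) := by push_cast; ring
      _ ≤ (1-p+p*u)^(m+2) := h
  have h1r : 1 - r ≤ ((m:ℝ)+2)*(p*(1-u)) := by linarith
  have h1ri : 1 - r^i ≤ (i:ℝ)*(((m:ℝ)+2)*(p*(1-u))) := by
    have h := one_add_mul_le_pow (a := r-1) (by linarith) i
    have e1 : (1:ℝ) + (r-1) = r := by ring
    rw [e1] at h
    have h2 : 1 - r^i ≤ (i:ℝ)*(1-r) := by nlinarith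
    have h3 : (i:ℝ)*(1-r) ≤ (i:ℝ)*(((m:ℝ)+2)*(p*(1-u))) :=
      mul_le_mul_of_nonneg_left h1r (Nat.cast_nonneg i)
    linarith
  have hri1 : r^i ≤ 1 := pow_le_one₀ hr0 hr1
  have hu2 : u^(m+2) ≤ u^2 := pow_le_pow_of_le_one hu0 hu1.le (by omega)
  have hD2 : 1-p+p*u^(m+2) ≤ 1 - p*(1-u^2) := by nlinarith
  have hE0 : (0:ℝ) ≤ 1 - p*(1-u^2) := by nlinarith
  have hDK : (1 - p + p*u^(m+2))^K ≤ (1 - p*(1-u^2))^K := pow_le_pow_left₀ hD0.le hD2 K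
  have hEK : (0:ℝ) ≤ (1 - p*(1-u^2))^K := pow_nonneg hE0 _
  have key : (1 - p + p*u^(m+2))^K * (1 - r^i)
      ≤ (1 - p*(1-u^2))^K * ((i:ℝ)*(((m:ℝ)+2)*(p*(1-u)))) :=
    mul_le_mul hDK h1ri (by linarith) hEK
  have hj2 : (0:ℝ) < (m:ℝ)+2 := by positivity
  have hj1 : (0:ℝ) < (m:ℝ)+1 := by positivity
  calc (1:ℝ) / (((m:ℝ) + 2) * ((m:ℝ) + 1)) * (1 - p + p * u ^ (m + 2)) ^ K * (1 - r^i)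
      = (1:ℝ) / (((m:ℝ) + 2) * ((m:ℝ) + 1)) * ((1 - p + p * u ^ (m + 2)) ^ K * (1 - r^i)) := by
        ring
    _ ≤ (1:ℝ) / (((m:ℝ) + 2) * ((m:ℝ) + 1)) *
          ((1 - p*(1-u^2))^K * ((i:ℝ)*(((m:ℝ)+2)*(p*(1-u))))) :=
        mul_le_mul_of_nonneg_left key (by positivity)
    _ = (1 - p*(1-u^2))^K * ((i:ℝ)*(p*(1-u))/((m:ℝ)+1)) := by
        field_simp

set_option maxHeartbeats 800000 in
private lemma term_lower (n : ℕ) (β : ℝ) (hβ0 : 0 ≤ β)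
    (hβle : β ≤ 1 - (n:ℝ)*(((m:ℝ)+2)*(p*(1-u)))) :
    (1-p)^K * (((n:ℝ)+1) * (β * (p*(1-u)/((m:ℝ)+1) - p/(((m:ℝ)+2)*((m:ℝ)+1)) - p^2/2)))
      ≤ (1:ℝ) / (((m:ℝ) + 2) * ((m:ℝ) + 1)) * (1 - p + p * u ^ (m + 2)) ^ K *
        (1 - ((1 - p + p * u) ^ (m + 2) / (1 - p + p * u ^ (m + 2))) ^ (n+1)) := by
  have hup : (0:ℝ) ≤ u ^ (m+2) := pow_nonneg hu0 _
  have hD0 : (0:ℝ) < 1 - p + p*u^(m+2) := by nlinarith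
  have hD1 : 1 - p + p*u^(m+2) ≤ 1 := by nlinarith [pow_le_one₀ hu0 hu1.le (n := m+2)]
  have hDp : 1 - p ≤ 1 - p + p*u^(m+2) := by nlinarith
  have hN0 : (0:ℝ) ≤ (1-p+p*u)^(m+2) := pow_nonneg (by nlinarith) _
  have hND : (1-p+p*u)^(m+2) ≤ 1 - p + p*u^(m+2) :=
    jensen_pow p u hp0.le (by linarith) hu0 _
  set D : ℝ := 1 - p + p*u^(m+2) with hDdef
  set N : ℝ := (1-p+p*u)^(m+2) with hNdef
  set r : ℝ := N/D with hrdef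
  have hr0 : 0 ≤ r := div_nonneg hN0 hD0.le
  have hr1 : r ≤ 1 := (div_le_one hD0).mpr hND
  have hrD : r * D = N := div_mul_cancel₀ _ hD0.ne'
  -- 1 - r ≥ D - N
  have h1rge : D - N ≤ 1 - r := by
    have h := mul_nonneg (sub_nonneg.mpr hr1) (sub_nonneg.mpr hD1)
    nlinarith [hrD]
  -- 1 - r ≤ (m+2) p (1-u)
  have hrN : N ≤ r := by
    rw [hrdef]
    calc N = N/1 := (div_one _).symm
      _ ≤ N/D := div_le_div_of_nonneg_left hN0 hD0 hD1
  have hNlow : 1 - ((m:ℝ)+2)*(p*(1-u)) ≤ N := by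
    have h := one_add_mul_le_pow (a := -(p*(1-u))) (by nlinarith) (m+2)
    have e1 : (1:ℝ) + -(p*(1-u)) = 1-p+p*u := by ring
    rw [e1] at h
    calc 1 - ((m:ℝ)+2)*(p*(1-u)) = 1 + ((m+2 : ℕ):ℝ) * (-(p*(1-u))) := by push_cast; ring
      _ ≤ N := h
  have h1r : 1 - r ≤ ((m:ℝ)+2)*(p*(1-u)) := by linarith
  -- r^n ≥ β
  have hrn : β ≤ r^n := by
    have h := one_add_mul_le_pow (a := r-1) (by linarith) n
    have e1 : (1:ℝ) + (r-1) = r := by ring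
    rw [e1] at h
    have h2 : (n:ℝ)*(1-r) ≤ (n:ℝ)*(((m:ℝ)+2)*(p*(1-u))) :=
      mul_le_mul_of_nonneg_left h1r (Nat.cast_nonneg n)
    linarith
  -- quadratic lower bound on D - N
  have hDN : p*(1-u)*((m:ℝ)+2) - p - ((m:ℝ)+2)*((m:ℝ)+1)/2*p^2 ≤ D - N := by
    have hx0 : (0:ℝ) ≤ p*(1-u) := by nlinarith
    have hx1 : p*(1-u) ≤ 1 := by nlinarith
    have hq := quad_upper (p*(1-u)) hx0 hx1 (m+2)
    have e1 : (1:ℝ) - p*(1-u) = 1-p+p*u := by ring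
    rw [e1] at hq
    have hcast : ((m+2 : ℕ):ℝ) = (m:ℝ)+2 := by push_cast; ring
    rw [hcast] at hq
    have hxp : p*(1-u) ≤ p := by nlinarith [mul_nonneg hp0.le hu0]
    have hsq : (p*(1-u))^2 ≤ p^2 := pow_le_pow_left₀ hx0 hxp 2
    have hmm : (0:ℝ) ≤ ((m:ℝ)+2)*(((m:ℝ)+2)-1)/2 := by nlinarith [Nat.cast_nonneg (α := ℝ) m]
    have hc : ((m:ℝ)+2)*(((m:ℝ)+2)-1)/2*((p*(1-u))^2) ≤ ((m:ℝ)+2)*((m:ℝ)+1)/2*p^2 := by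
      have h2 := mul_le_mul_of_nonneg_left hsq hmm
      have e : ((m:ℝ)+2)*(((m:ℝ)+2)-1)/2 = ((m:ℝ)+2)*((m:ℝ)+1)/2 := by ring
      rw [e] at h2
      linarith [h2]
    linarith [hq, hc, mul_nonneg hp0.le hup]
  set A : ℝ := p*(1-u)*((m:ℝ)+2) - p - ((m:ℝ)+2)*((m:ℝ)+1)/2*p^2 with hAdef
  have e1 : A ≤ 1 - r := le_trans hDN h1rge
  have h1r0 : (0:ℝ) ≤ 1 - r := by linarith
  have e2 : ((n:ℝ)+1)*(β*A) ≤ ((n:ℝ)+1)*(r^n*(1-r)) := by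
    apply mul_le_mul_of_nonneg_left _ (by positivity)
    calc β*A ≤ β*(1-r) := mul_le_mul_of_nonneg_left e1 hβ0
      _ ≤ r^n*(1-r) := mul_le_mul_of_nonneg_right hrn h1r0
  have e3 : ((n:ℝ)+1)*(r^n*(1-r)) ≤ 1 - r^(n+1) := by
    have := geom_lower r hr0 hr1 n
    linarith [this, (mul_assoc ((n:ℝ)+1) (r^n) (1-r)).symm]
  have hrn1 : r^(n+1) ≤ 1 := pow_le_one₀ hr0 hr1
  have hDKpos : (0:ℝ) ≤ D^K := pow_nonneg hD0.le _
  have hpK : (1-p)^K ≤ D^K := pow_le_pow_left₀ (by linarith) hDp K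
  have e4 : (1-p)^K * (((n:ℝ)+1)*(β*A)) ≤ D^K * (1 - r^(n+1)) := by
    rcases le_or_gt 0 (((n:ℝ)+1)*(β*A)) with hc | hc
    · exact mul_le_mul hpK (e2.trans e3) hc hDKpos
    · have hL : (1-p)^K * (((n:ℝ)+1)*(β*A)) ≤ 0 :=
        mul_nonpos_of_nonneg_of_nonpos (pow_nonneg (by linarith) _) hc.le
      have hR : (0:ℝ) ≤ D^K * (1 - r^(n+1)) := mul_nonneg hDKpos (by linarith)
      linarith
  have hj2 : (0:ℝ) < (m:ℝ)+2 := by positivity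
  have hj1 : (0:ℝ) < (m:ℝ)+1 := by positivity
  calc (1-p)^K * (((n:ℝ)+1) * (β * (p*(1-u)/((m:ℝ)+1) - p/(((m:ℝ)+2)*((m:ℝ)+1)) - p^2/2)))
      = (1:ℝ)/(((m:ℝ)+2)*((m:ℝ)+1)) * ((1-p)^K * (((n:ℝ)+1)*(β*A))) := by
        have hsc : p*(1-u)/((m:ℝ)+1) - p/(((m:ℝ)+2)*((m:ℝ)+1)) - p^2/2
            = A / (((m:ℝ)+2)*((m:ℝ)+1)) := by
          rw [hAdef]; field_simp
        rw [hsc]; ring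
    _ ≤ (1:ℝ)/(((m:ℝ)+2)*((m:ℝ)+1)) * (D^K * (1 - r^(n+1))) :=
        mul_le_mul_of_nonneg_left e4 (by positivity)
    _ = (1:ℝ) / (((m:ℝ) + 2) * ((m:ℝ) + 1)) * D ^ K * (1 - r^(n+1)) := by ring

end terms

private lemma fin_tele (M : ℕ) :
    ∑ m ∈ Finset.range M, (1:ℝ)/(((m:ℝ)+2)*((m:ℝ)+1)) = 1 - 1/((M:ℝ)+1) := by
  have h := Finset.sum_range_sub' (fun m : ℕ => (1:ℝ)/((m:ℝ)+1)) M
  have h2 : ∑ m ∈ Finset.range M, (1:ℝ)/(((m:ℝ)+2)*((m:ℝ)+1))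
      = ∑ m ∈ Finset.range M, ((1:ℝ)/((m:ℝ)+1) - 1/((↑(m+1):ℝ)+1)) := by
    apply Finset.sum_congr rfl
    intro m _
    have h1 : ((m:ℝ)+1) ≠ 0 := by positivity
    have h2 : ((m:ℝ)+2) ≠ 0 := by positivity
    push_cast
    field_simp
    ring
  rw [h2, h]
  norm_num

private lemma tele_hasSum (n : ℕ) :
    HasSum (fun m : ℕ => (1:ℝ)/(((n:ℝ)+(m:ℝ)+2)*((n:ℝ)+(m:ℝ)+1))) (1/((n:ℝ)+1)) := by
  have hnn : ∀ m : ℕ, 0 ≤ (1:ℝ)/(((n:ℝ)+(m:ℝ)+2)*((n:ℝ)+(m:ℝ)+1)) := fun m => by positivity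
  rw [hasSum_iff_tendsto_nat_of_nonneg hnn]
  have key : ∀ N : ℕ, ∑ m ∈ Finset.range N, (1:ℝ)/(((n:ℝ)+(m:ℝ)+2)*((n:ℝ)+(m:ℝ)+1))
      = 1/((n:ℝ)+1) - 1/((n:ℝ)+(N:ℝ)+1) := by
    intro N
    have h := Finset.sum_range_sub' (fun m : ℕ => (1:ℝ)/((n:ℝ)+(m:ℝ)+1)) N
    have h2 : ∑ m ∈ Finset.range N, (1:ℝ)/(((n:ℝ)+(m:ℝ)+2)*((n:ℝ)+(m:ℝ)+1))
        = ∑ m ∈ Finset.range N, ((1:ℝ)/((n:ℝ)+(m:ℝ)+1) - 1/((n:ℝ)+(↑(m+1):ℝ)+1)) := by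
      apply Finset.sum_congr rfl
      intro m _
      have h1 : ((n:ℝ)+(m:ℝ)+1) ≠ 0 := by positivity
      have h2 : ((n:ℝ)+(m:ℝ)+2) ≠ 0 := by positivity
      push_cast
      field_simp
      ring
    rw [h2, h]
    norm_num
  have hlim : Tendsto (fun N : ℕ => 1/((n:ℝ)+1) - 1/((n:ℝ)+(N:ℝ)+1)) atTop
      (nhds (1/((n:ℝ)+1))) := by
    have h1 : Tendsto (fun N : ℕ => ((n:ℝ)+(N:ℝ)+1)) atTop atTop := by
      apply tendsto_atTop_add_const_right
      exact tendsto_atTop_add_const_left _ _ tendsto_natCast_atTop_atTop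
    have h2 : Tendsto (fun N : ℕ => 1/((n:ℝ)+(N:ℝ)+1)) atTop (nhds 0) := by
      simp only [one_div]; exact h1.inv_tendsto_atTop
    simpa using tendsto_const_nhds.sub h2
  exact hlim.congr (fun N => (key N).symm)

private lemma sq_summable : Summable (fun m : ℕ => (1:ℝ)/(((m:ℝ)+2)*((m:ℝ)+1))) := by
  have base : Summable (fun m : ℕ => (1:ℝ)/((m:ℝ)+1)^2) := by
    have h := Real.summable_one_div_nat_pow.mpr one_lt_two
    have := (summable_nat_add_iff 1).mpr h
    apply this.congr
    intro m
    push_cast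
    ring
  apply Summable.of_nonneg_of_le (fun m => by positivity) (fun m => ?_) base
  apply div_le_div_of_nonneg_left one_pos.le (by positivity)
  nlinarith [Nat.cast_nonneg (α := ℝ) m]

private lemma term_summable (p u : ℝ) (K : ℕ) (hp0 : 0 < p) (hp2 : p ≤ 1/2)
    (hu0 : 0 ≤ u) (hu1 : u < 1) (i : ℕ) :
    Summable (fun m : ℕ => (1:ℝ)/(((m:ℝ)+2)*((m:ℝ)+1)) * (1-p+p*u^(m+2))^K *
      (1 - ((1-p+p*u)^(m+2)/(1-p+p*u^(m+2)))^i)) :=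
  Summable.of_nonneg_of_le (fun m => term_nonneg p u K m hp0 hp2 hu0 hu1 i)
    (fun m => term_le_triv p u K m hp0 hp2 hu0 hu1 i) sq_summable

private lemma harmonic_eq (n : ℕ) :
    ((harmonic n : ℚ) : ℝ) = ∑ m ∈ Finset.range n, (1:ℝ)/((m:ℝ)+1) := by
  rw [harmonic]
  push_cast
  apply Finset.sum_congr rfl
  intro m _
  rw [one_div]

private lemma I2_upper_bound (i : ℕ) (u α : ℝ) (hu0 : 0 ≤ u) (hu1 : u < 1) (hα : 0 < α)
    (K : ℕ) (hK2 : 2 ≤ K) (hp2 : α/(K:ℝ) ≤ 1/2) :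
    I2q0 K i (α/(K:ℝ)) u ≤ (1/Real.log 2) *
      (Real.exp (-(α*(1-u^2))) * ((i:ℝ)*((α/(K:ℝ))*(1-u)) * (1 + Real.log K)) + 1/(K:ℝ)) := by
  obtain ⟨n, rfl⟩ : ∃ n, K = n + 1 := ⟨K-1, by omega⟩
  have hn1 : 1 ≤ n := by omega
  have hKpos : (0:ℝ) < ((n+1:ℕ):ℝ) := by positivity
  set p : ℝ := α/((n+1:ℕ):ℝ) with hpdef
  have hp0 : 0 < p := div_pos hα hKpos
  set f : ℕ → ℝ := fun m => (1:ℝ)/(((m:ℝ)+2)*((m:ℝ)+1)) * (1-p+p*u^(m+2))^(n+1) *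
      (1 - ((1-p+p*u)^(m+2)/(1-p+p*u^(m+2)))^i) with hfdef
  have hsum : Summable f := term_summable p u (n+1) hp0 hp2 hu0 hu1 i
  have hsplit : (∑ m ∈ Finset.range n, f m) + ∑' m, f (m + n) = ∑' m, f m :=
    Summable.sum_add_tsum_nat_add n hsum
  -- tail bound
  have htail : ∑' m, f (m + n) ≤ 1/((n:ℝ)+1) := by
    have hs1 : Summable (fun m => f (m+n)) := (summable_nat_add_iff n).mpr hsum
    have hb : ∀ m : ℕ, f (m+n) ≤ (1:ℝ)/(((n:ℝ)+(m:ℝ)+2)*((n:ℝ)+(m:ℝ)+1)) := by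
      intro m
      calc f (m+n) ≤ (1:ℝ)/(((↑(m+n):ℝ)+2)*((↑(m+n):ℝ)+1)) :=
            term_le_triv p u (n+1) (m+n) hp0 hp2 hu0 hu1 i
        _ = (1:ℝ)/(((n:ℝ)+(m:ℝ)+2)*((n:ℝ)+(m:ℝ)+1)) := by push_cast; ring_nf
    calc ∑' m, f (m + n) ≤ ∑' (m : ℕ), (1:ℝ)/(((n:ℝ)+(m:ℝ)+2)*((n:ℝ)+(m:ℝ)+1)) :=
          Summable.tsum_le_tsum hb hs1 (tele_hasSum n).summable
      _ = 1/((n:ℝ)+1) := (tele_hasSum n).tsum_eq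
  -- finite part
  have hufac : (0:ℝ) ≤ 1 - u^2 := by nlinarith
  have hE0 : (0:ℝ) ≤ 1 - p*(1-u^2) := by nlinarith
  have hEK0 : (0:ℝ) ≤ (1 - p*(1-u^2))^(n+1) := pow_nonneg hE0 _
  have hfin : ∑ m ∈ Finset.range n, f m
      ≤ (1 - p*(1-u^2))^(n+1) * ((i:ℝ)*(p*(1-u)) * (1 + Real.log ((n+1:ℕ):ℝ))) := by
    have h1 : ∑ m ∈ Finset.range n, f m
        ≤ ∑ m ∈ Finset.range n, (1 - p*(1-u^2))^(n+1) * ((i:ℝ)*(p*(1-u))/((m:ℝ)+1)) :=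
      Finset.sum_le_sum (fun m _ => term_upper p u (n+1) m hp0 hp2 hu0 hu1 i)
    have h2 : ∑ m ∈ Finset.range n, (1 - p*(1-u^2))^(n+1) * ((i:ℝ)*(p*(1-u))/((m:ℝ)+1))
        = (1 - p*(1-u^2))^(n+1) * ((i:ℝ)*(p*(1-u))) * ∑ m ∈ Finset.range n, (1:ℝ)/((m:ℝ)+1) := by
      rw [Finset.mul_sum]
      apply Finset.sum_congr rfl
      intro m _
      ring
    have hH : ∑ m ∈ Finset.range n, (1:ℝ)/((m:ℝ)+1) ≤ 1 + Real.log ((n+1:ℕ):ℝ) := by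
      rw [← harmonic_eq]
      have := harmonic_le_one_add_log n
      have hlog : Real.log (n:ℝ) ≤ Real.log ((n+1:ℕ):ℝ) := by
        apply Real.log_le_log (by exact_mod_cast hn1 : (0:ℝ) < (n:ℝ) )
        push_cast; linarith
      linarith
    have h3 : (1 - p*(1-u^2))^(n+1) * ((i:ℝ)*(p*(1-u))) * (∑ m ∈ Finset.range n, (1:ℝ)/((m:ℝ)+1))
        ≤ (1 - p*(1-u^2))^(n+1) * ((i:ℝ)*(p*(1-u))) * (1 + Real.log ((n+1:ℕ):ℝ)) := by
      apply mul_le_mul_of_nonneg_left hH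
      have : (0:ℝ) ≤ p*(1-u) := by nlinarith
      positivity
    calc ∑ m ∈ Finset.range n, f m
        ≤ (1 - p*(1-u^2))^(n+1) * ((i:ℝ)*(p*(1-u))) * ∑ m ∈ Finset.range n, (1:ℝ)/((m:ℝ)+1) := by
          rw [← h2]; exact h1
      _ ≤ (1 - p*(1-u^2))^(n+1) * ((i:ℝ)*(p*(1-u))) * (1 + Real.log ((n+1:ℕ):ℝ)) := h3
      _ = (1 - p*(1-u^2))^(n+1) * ((i:ℝ)*(p*(1-u)) * (1 + Real.log ((n+1:ℕ):ℝ))) := by ring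
  -- replace the power with the exponential
  have hE : (1 - p*(1-u^2))^(n+1) ≤ Real.exp (-(α*(1-u^2))) := by
    have h1 : 1 - p*(1-u^2) ≤ Real.exp (-(p*(1-u^2))) := by
      linarith [Real.add_one_le_exp (-(p*(1-u^2)))]
    calc (1 - p*(1-u^2))^(n+1) ≤ (Real.exp (-(p*(1-u^2))))^(n+1) := pow_le_pow_left₀ hE0 h1 _
      _ = Real.exp (((n+1:ℕ):ℝ) * (-(p*(1-u^2)))) := (Real.exp_nat_mul _ _).symm
      _ = Real.exp (-(α*(1-u^2))) := by
          congr 1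
          rw [hpdef]
          field_simp
  have hcoef : (0:ℝ) ≤ (i:ℝ)*(p*(1-u)) * (1 + Real.log ((n+1:ℕ):ℝ)) := by
    have h1 : (0:ℝ) ≤ p*(1-u) := by nlinarith
    have h2 : (0:ℝ) ≤ Real.log ((n+1:ℕ):ℝ) := by
      apply Real.log_nonneg
      push_cast; linarith
    positivity
  have hfin2 : ∑ m ∈ Finset.range n, f m
      ≤ Real.exp (-(α*(1-u^2))) * ((i:ℝ)*(p*(1-u)) * (1 + Real.log ((n+1:ℕ):ℝ))) :=
    hfin.trans (mul_le_mul_of_nonneg_right hE hcoef)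
  have hts : ∑' m, f m ≤ Real.exp (-(α*(1-u^2))) *
      ((i:ℝ)*(p*(1-u)) * (1 + Real.log ((n+1:ℕ):ℝ))) + 1/((n:ℝ)+1) := by
    rw [← hsplit]
    exact add_le_add hfin2 htail
  have hlog2 : (0:ℝ) < 1/Real.log 2 := by
    rw [one_div]
    exact inv_pos.mpr (Real.log_pos one_lt_two)
  show (1 / Real.log 2) * ∑' m, f m ≤ _
  have hre : (i:ℝ)*((α/((n+1:ℕ):ℝ))*(1-u)) = (i:ℝ)*(p*(1-u)) := by rw [hpdef]
  rw [hre]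
  have h1n : (1:ℝ)/((n+1:ℕ):ℝ) = 1/((n:ℝ)+1) := by norm_cast
  rw [h1n]
  exact mul_le_mul_of_nonneg_left hts hlog2.le

set_option maxHeartbeats 1000000 in
private lemma I2_lower_bound (n : ℕ) (u α : ℝ) (hu0 : 0 ≤ u) (hu1 : u < 1) (hα : 0 < α)
    (K : ℕ) (hK1 : 1 ≤ K) (hp2 : α/(K:ℝ) ≤ 1/2) (hl1 : 1 ≤ Real.log K)
    (hJ2 : 2 ≤ ⌊(K:ℝ)/Real.log K⌋₊)
    (hβ0 : 0 ≤ 1 - (n:ℝ)*α/Real.log K) :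
    (1/Real.log 2) * ((1 - α/(K:ℝ))^K * (((n:ℝ)+1) * ((1 - (n:ℝ)*α/Real.log K) *
      ((α/(K:ℝ)) * ((1-u)*(Real.log K - Real.log (2*Real.log K)) - (1+α))))))
      ≤ I2q0 K (n+1) (α/(K:ℝ)) u := by
  have hKpos : (0:ℝ) < (K:ℝ) := by exact_mod_cast hK1
  set p : ℝ := α/(K:ℝ) with hpdef
  have hp0 : 0 < p := div_pos hα hKpos
  set l : ℝ := Real.log K with hldef
  have hl0 : (0:ℝ) < l := lt_of_lt_of_le one_pos hl1
  set J : ℕ := ⌊(K:ℝ)/l⌋₊ with hJdef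
  set β : ℝ := 1 - (n:ℝ)*α/l with hβdef
  set f : ℕ → ℝ := fun m => (1:ℝ)/(((m:ℝ)+2)*((m:ℝ)+1)) * (1-p+p*u^(m+2))^K *
      (1 - ((1-p+p*u)^(m+2)/(1-p+p*u^(m+2)))^(n+1)) with hfdef
  have hsum : Summable f := term_summable p u K hp0 hp2 hu0 hu1 (n+1)
  have hJle : (J:ℝ) ≤ (K:ℝ)/l := Nat.floor_le (by positivity)
  have hJr2 : (2:ℝ) ≤ (J:ℝ) := by exact_mod_cast hJ2
  have hJge : (K:ℝ)/l ≤ (J:ℝ)+1 := (Nat.lt_floor_add_one _).le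
  have hKl2 : (2:ℝ) ≤ (K:ℝ)/l := le_trans hJr2 hJle
  have hJhalf : (K:ℝ)/(2*l) ≤ (J:ℝ) := by
    have h1 : (K:ℝ)/(2*l) = ((K:ℝ)/l)/2 := by
      rw [div_div, mul_comm]
    rw [h1]
    linarith
  have hJp : (J:ℝ)*p ≤ α/l := by
    calc (J:ℝ)*p ≤ ((K:ℝ)/l)*p := mul_le_mul_of_nonneg_right hJle hp0.le
      _ = α/l := by rw [hpdef]; field_simp
  -- termwise lower bound over m ∈ range (J-1)
  have hterm : ∀ m ∈ Finset.range (J-1),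
      (1-p)^K * (((n:ℝ)+1) * (β * (p*(1-u)/((m:ℝ)+1) - p/(((m:ℝ)+2)*((m:ℝ)+1)) - p^2/2)))
        ≤ f m := by
    intro m hm
    apply term_lower p u K m hp0 hp2 hu0 hu1 n β hβ0
    have hmJ : m + 2 ≤ J := by
      have := Finset.mem_range.mp hm
      omega
    have hmJr : ((m:ℝ)+2) ≤ (J:ℝ) := by exact_mod_cast hmJ
    have h1u : 1 - u ≤ 1 := by linarith
    have h2 : ((m:ℝ)+2)*(p*(1-u)) ≤ (J:ℝ)*p := by
      have ha : (0:ℝ) ≤ p*(1-u) := by nlinarith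
      calc ((m:ℝ)+2)*(p*(1-u)) ≤ (J:ℝ)*(p*(1-u)) := mul_le_mul_of_nonneg_right hmJr ha
        _ ≤ (J:ℝ)*p := by
            apply mul_le_mul_of_nonneg_left _ (by positivity)
            nlinarith
    have h3 : (n:ℝ)*(((m:ℝ)+2)*(p*(1-u))) ≤ (n:ℝ)*(α/l) := by
      apply mul_le_mul_of_nonneg_left (le_trans h2 hJp) (Nat.cast_nonneg n)
    rw [hβdef]
    have : (n:ℝ)*α/l = (n:ℝ)*(α/l) := by ring
    linarith [h3, this.le, this.ge]
  -- sum of the lower bounds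
  set H : ℝ := ∑ m ∈ Finset.range (J-1), (1:ℝ)/((m:ℝ)+1) with hHdef
  set S : ℝ := ∑ m ∈ Finset.range (J-1), (1:ℝ)/(((m:ℝ)+2)*((m:ℝ)+1)) with hSdef
  have hg : ∑ m ∈ Finset.range (J-1),
      (p*(1-u)/((m:ℝ)+1) - p/(((m:ℝ)+2)*((m:ℝ)+1)) - p^2/2)
      = p*(1-u)*H - p*S - (↑(J-1):ℝ)*(p^2/2) := by
    rw [Finset.sum_sub_distrib, Finset.sum_sub_distrib, Finset.sum_const, Finset.card_range,
      nsmul_eq_mul, hHdef, hSdef, Finset.mul_sum, Finset.mul_sum]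
    congr 1
    congr 1
    · apply Finset.sum_congr rfl; intro m _; ring
    · apply Finset.sum_congr rfl; intro m _; ring
  -- bounds on H, S and the error term
  have hH : l - Real.log (2*l) ≤ H := by
    have h1 : Real.log ((J-1:ℕ)+1 : ℕ) ≤ ((harmonic (J-1) : ℚ) : ℝ) := log_add_one_le_harmonic (J-1)
    have h2 : ((J-1:ℕ)+1 : ℕ) = J := by omega
    rw [h2, harmonic_eq] at h1
    have h3 : Real.log ((K:ℝ)/(2*l)) ≤ Real.log (J:ℝ) := by
      apply Real.log_le_log (by positivity) hJhalf
    have h4 : Real.log ((K:ℝ)/(2*l)) = Real.log K - Real.log (2*l) :=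
      Real.log_div (ne_of_gt hKpos) (by positivity)
    rw [← hHdef] at h1
    rw [h4] at h3
    linarith
  have hS : S ≤ 1 := by
    rw [hSdef, fin_tele]
    have : (0:ℝ) < 1/((↑(J-1):ℝ)+1) := by positivity
    linarith
  have hJp2 : (↑(J-1):ℝ)*(p^2/2) ≤ α*p := by
    have h1 : (↑(J-1):ℝ) ≤ (J:ℝ) := by exact_mod_cast Nat.sub_le J 1
    have h2 : (↑(J-1):ℝ)*(p^2/2) ≤ (J:ℝ)*(p^2/2) := mul_le_mul_of_nonneg_right h1 (by positivity)
    have h3 : (J:ℝ)*(p^2/2) = ((J:ℝ)*p)*(p/2) := by ring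
    have h4 : ((J:ℝ)*p)*(p/2) ≤ (α/l)*(p/2) := mul_le_mul_of_nonneg_right hJp (by positivity)
    have h5 : (α/l) ≤ α := by
      rw [div_le_iff₀ hl0]
      nlinarith
    have h6 : (α/l)*(p/2) ≤ α*(p/2) := mul_le_mul_of_nonneg_right h5 (by positivity)
    have h7 : (0:ℝ) ≤ α*p := by positivity
    linarith [h2, h4, h6, h7, h3.le, h3.ge]
  have hinner : p * ((1-u)*(l - Real.log (2*l)) - (1+α))
      ≤ p*(1-u)*H - p*S - (↑(J-1):ℝ)*(p^2/2) := by
    have h1 : p*(1-u)*(l - Real.log (2*l)) ≤ p*(1-u)*H := by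
      apply mul_le_mul_of_nonneg_left hH
      nlinarith
    have h2 : p*S ≤ p*1 := mul_le_mul_of_nonneg_left hS hp0.le
    linarith [h1, h2, hJp2]
  -- assemble
  have hpow0 : (0:ℝ) ≤ (1-p)^K := pow_nonneg (by linarith) _
  have key : (1 - p)^K * (((n:ℝ)+1) * (β * (p * ((1-u)*(l - Real.log (2*l)) - (1+α)))))
      ≤ ∑' m, f m := by
    calc (1 - p)^K * (((n:ℝ)+1) * (β * (p * ((1-u)*(l - Real.log (2*l)) - (1+α)))))
        ≤ (1 - p)^K * (((n:ℝ)+1) * (β * (p*(1-u)*H - p*S - (↑(J-1):ℝ)*(p^2/2)))) := by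
          apply mul_le_mul_of_nonneg_left _ hpow0
          apply mul_le_mul_of_nonneg_left _ (by positivity)
          exact mul_le_mul_of_nonneg_left hinner hβ0
      _ = ∑ m ∈ Finset.range (J-1),
            (1-p)^K * (((n:ℝ)+1) * (β * (p*(1-u)/((m:ℝ)+1) - p/(((m:ℝ)+2)*((m:ℝ)+1)) - p^2/2))) := by
          rw [← hg, Finset.mul_sum, Finset.mul_sum, Finset.mul_sum]
      _ ≤ ∑ m ∈ Finset.range (J-1), f m := Finset.sum_le_sum hterm
      _ ≤ ∑' m, f m := Summable.sum_le_tsum _ (fun m _ => term_nonneg p u K m hp0 hp2 hu0 hu1 (n+1)) hsum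
  have hlog2 : (0:ℝ) < 1/Real.log 2 := by
    rw [one_div]
    exact inv_pos.mpr (Real.log_pos one_lt_two)
  show _ ≤ (1 / Real.log 2) * ∑' m, f m
  exact mul_le_mul_of_nonneg_left key hlog2.le

set_option maxHeartbeats 1000000 in
/-- For q = 0, p = α/K: I₂ = Θ((log K)/K); precisely
α e^{-α} i (1-u)/ln 2 ≤ liminf (K/ln K)·I₂ and
limsup (K/ln K)·I₂ ≤ α e^{-α(1-u²)} i (1-u)/ln 2. -/
theorem I2_q0_liminf_limsup (i : ℕ) (hi : 1 ≤ i) (u α : ℝ)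
    (hu : u ∈ Set.Ico (0:ℝ) 1) (hα : 0 < α) :
    α * Real.exp (-α) * i * (1 - u) / Real.log 2 ≤
        liminf (fun K : ℕ => ((K : ℝ) / Real.log K) * I2q0 K i (α / K) u) atTop
    ∧ limsup (fun K : ℕ => ((K : ℝ) / Real.log K) * I2q0 K i (α / K) u) atTop ≤
        α * Real.exp (-α * (1 - u ^ 2)) * i * (1 - u) / Real.log 2 := by
  obtain ⟨hu0, hu1⟩ := hu
  obtain ⟨n, rfl⟩ : ∃ n, i = n + 1 := ⟨i-1, by omega⟩
  set F : ℕ → ℝ := fun K : ℕ => ((K : ℝ) / Real.log K) * I2q0 K (n+1) (α / K) u with hFdef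
  set Lo : ℕ → ℝ := fun K : ℕ => (1/Real.log 2) * ((1 - α/(K:ℝ))^K * (((n:ℝ)+1) *
      ((1 - (n:ℝ)*α/Real.log K) *
        (α * ((1-u)*(1 - Real.log (2*Real.log K)/Real.log K) - (1+α)/Real.log K))))) with hLodef
  set Up : ℕ → ℝ := fun K : ℕ => (1/Real.log 2) *
      (Real.exp (-(α*(1-u^2))) * ((↑(n+1):ℝ)*(α*(1-u)) * ((1 + Real.log K)/Real.log K))
        + 1/Real.log K) with hUpdef
  have hlog2 : (0:ℝ) < Real.log 2 := Real.log_pos one_lt_two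
  have hlogK : Tendsto (fun K : ℕ => Real.log K) atTop atTop :=
    Real.tendsto_log_atTop.comp tendsto_natCast_atTop_atTop
  have h1l : Tendsto (fun K : ℕ => 1/Real.log K) atTop (nhds 0) :=
    tendsto_const_nhds.div_atTop hlogK
  have hR : Tendsto (fun K : ℕ => Real.log (2*Real.log K)/Real.log K) atTop (nhds 0) := by
    have hx : Tendsto (fun x : ℝ => Real.log (2*x)/x) atTop (nhds 0) := by
      have h1 : Tendsto (fun x : ℝ => Real.log 2/x + Real.log x/x) atTop (nhds 0) := by
        have ha : Tendsto (fun x : ℝ => Real.log 2/x) atTop (nhds 0) :=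
          tendsto_const_nhds.div_atTop tendsto_id
        have hb : Tendsto (fun x : ℝ => Real.log x/x) atTop (nhds 0) :=
          Real.isLittleO_log_id_atTop.tendsto_div_nhds_zero
        simpa using ha.add hb
      apply h1.congr'
      filter_upwards [eventually_gt_atTop (0:ℝ)] with x hx
      rw [Real.log_mul two_ne_zero (ne_of_gt hx)]
      ring
    exact hx.comp hlogK
  have hP : Tendsto (fun K : ℕ => (1 - α/(K:ℝ))^K) atTop (nhds (Real.exp (-α))) := by
    apply (Real.tendsto_one_add_div_pow_exp (-α)).congr
    intro K
    rw [neg_div, ← sub_eq_add_neg]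
  have hB : Tendsto (fun K : ℕ => 1 - (n:ℝ)*α/Real.log K) atTop (nhds 1) := by
    have h := tendsto_const_nhds.div_atTop (a := (n:ℝ)*α) hlogK
    simpa using tendsto_const_nhds.sub h
  have hQ : Tendsto (fun K : ℕ => (1 + Real.log K)/Real.log K) atTop (nhds 1) := by
    have h : Tendsto (fun K : ℕ => 1/Real.log K + 1) atTop (nhds 1) := by
      simpa using h1l.add_const 1
    apply h.congr'
    filter_upwards [hlogK.eventually_gt_atTop 0] with K hK
    field_simp
  have hA : Tendsto (fun K : ℕ => (1+α)/Real.log K) atTop (nhds 0) :=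
    tendsto_const_nhds.div_atTop hlogK
  -- limits of Lo and Up
  have hLoT : Tendsto Lo atTop
      (nhds (α * Real.exp (-α) * (↑(n+1):ℝ) * (1 - u) / Real.log 2)) := by
    have t1 : Tendsto (fun K : ℕ => (1-u)*(1 - Real.log (2*Real.log K)/Real.log K)
        - (1+α)/Real.log K) atTop (nhds ((1-u)*(1-0) - 0)) :=
      (((tendsto_const_nhds.sub hR).const_mul (1-u))).sub hA
    have t2 := t1.const_mul α
    have t3 := hB.mul t2
    have t4 := t3.const_mul ((n:ℝ)+1)
    have t5 := hP.mul t4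
    have t6 := t5.const_mul (1/Real.log 2)
    have heq : (1/Real.log 2) * (Real.exp (-α) * (((n:ℝ)+1) * (1 * (α * ((1-u)*(1-0) - 0)))))
        = α * Real.exp (-α) * (↑(n+1):ℝ) * (1 - u) / Real.log 2 := by
      push_cast
      ring
    rw [← heq]
    exact t6
  have hUpT : Tendsto Up atTop
      (nhds (α * Real.exp (-(α*(1-u^2))) * (↑(n+1):ℝ) * (1 - u) / Real.log 2)) := by
    have t1 := (hQ.const_mul ((↑(n+1):ℝ)*(α*(1-u)))).const_mul (Real.exp (-(α*(1-u^2))))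
    have t2 := (t1.add h1l).const_mul (1/Real.log 2)
    have heq : (1/Real.log 2) * (Real.exp (-(α*(1-u^2))) * ((↑(n+1):ℝ)*(α*(1-u)) * 1) + 0)
        = α * Real.exp (-(α*(1-u^2))) * (↑(n+1):ℝ) * (1 - u) / Real.log 2 := by
      push_cast
      ring
    rw [← heq]
    exact t2
  -- eventual inequalities
  have e2 : ∀ᶠ K : ℕ in atTop, α/(K:ℝ) ≤ 1/2 := by
    have h : Tendsto (fun K : ℕ => α/(K:ℝ)) atTop (nhds 0) :=
      tendsto_const_nhds.div_atTop tendsto_natCast_atTop_atTop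
    exact h.eventually_le_const (by norm_num)
  have e3 : ∀ᶠ K : ℕ in atTop, 1 ≤ Real.log K := hlogK.eventually_ge_atTop 1
  have e4 : ∀ᶠ K : ℕ in atTop, 2 ≤ ⌊(K:ℝ)/Real.log K⌋₊ := by
    have hll : ∀ᶠ x : ℝ in atTop, ‖Real.log x‖ ≤ (1/2) * ‖x‖ :=
      Real.isLittleO_log_id_atTop.def (by norm_num)
    have hx : ∀ᶠ x : ℝ in atTop, 2 ≤ ⌊x/Real.log x⌋₊ := by
      filter_upwards [hll, eventually_ge_atTop (1:ℝ),
        (Real.tendsto_log_atTop.eventually_ge_atTop 1)] with x h1 h2 h3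
      have hx0 : 0 < x := by linarith
      have hlx : Real.log x ≤ x/2 := by
        have := h1
        rw [Real.norm_eq_abs, Real.norm_eq_abs, abs_of_nonneg (by linarith : (0:ℝ) ≤ Real.log x),
          abs_of_nonneg hx0.le] at this
        linarith
      have hl0 : (0:ℝ) < Real.log x := by linarith
      have h4 : (2:ℝ) ≤ x/Real.log x := by
        rw [le_div_iff₀ hl0]
        linarith
      exact Nat.le_floor (by exact_mod_cast h4)
    exact tendsto_natCast_atTop_atTop.eventually hx
  have e5 : ∀ᶠ K : ℕ in atTop, 0 ≤ 1 - (n:ℝ)*α/Real.log K :=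
    hB.eventually_const_le (by norm_num)
  have e6 : ∀ᶠ K : ℕ in atTop, 2 ≤ K := eventually_ge_atTop 2
  have hevLo : ∀ᶠ K : ℕ in atTop, Lo K ≤ F K := by
    filter_upwards [e2, e3, e4, e5, e6] with K h2 h3 h4 h5 h6
    have hkey := I2_lower_bound n u α hu0 hu1 hα K (by omega) h2 h3 h4 h5
    have hK0 : (K:ℝ) ≠ 0 := by positivity
    have hl0 : Real.log K ≠ 0 := by linarith
    have hKl0 : (0:ℝ) ≤ (K:ℝ)/Real.log K := div_nonneg (Nat.cast_nonneg K) (by linarith)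
    have hmul := mul_le_mul_of_nonneg_left hkey hKl0
    have heq : Lo K = ((K:ℝ)/Real.log K) *
        ((1/Real.log 2) * ((1 - α/(K:ℝ))^K * (((n:ℝ)+1) * ((1 - (n:ℝ)*α/Real.log K) *
          ((α/(K:ℝ)) * ((1-u)*(Real.log K - Real.log (2*Real.log K)) - (1+α))))))) := by
      simp only [hLodef]
      field_simp
    rw [heq]
    exact hmul
  have hevUp : ∀ᶠ K : ℕ in atTop, F K ≤ Up K := by
    filter_upwards [e2, e3, e6] with K h2 h3 h6
    have hkey := I2_upper_bound (n+1) u α hu0 hu1 hα K h6 h2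
    have hK0 : (K:ℝ) ≠ 0 := by positivity
    have hl0 : Real.log K ≠ 0 := by linarith
    have hKl0 : (0:ℝ) ≤ (K:ℝ)/Real.log K := div_nonneg (Nat.cast_nonneg K) (by linarith)
    have hmul := mul_le_mul_of_nonneg_left hkey hKl0
    have heq : Up K = ((K:ℝ)/Real.log K) * ((1/Real.log 2) *
        (Real.exp (-(α*(1-u^2))) * ((↑(n+1):ℝ)*((α/(K:ℝ))*(1-u)) * (1 + Real.log K))
          + 1/(K:ℝ))) := by
      simp only [hUpdef]
      field_simp
    rw [heq]
    exact hmul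
  -- cobounded facts
  have hcobF_ge : IsCoboundedUnder (· ≥ ·) atTop F := by
    apply isCoboundedUnder_ge_of_eventually_le atTop
      (x := α * Real.exp (-(α*(1-u^2))) * (↑(n+1):ℝ) * (1 - u) / Real.log 2 + 1)
    filter_upwards [hevUp, hUpT.eventually_le_const
      (lt_add_one (α * Real.exp (-(α*(1-u^2))) * (↑(n+1):ℝ) * (1 - u) / Real.log 2))]
      with K ha hb
    linarith
  have hcobF_le : IsCoboundedUnder (· ≤ ·) atTop F := by
    apply isCoboundedUnder_le_of_eventually_le atTop
      (x := α * Real.exp (-α) * (↑(n+1):ℝ) * (1 - u) / Real.log 2 - 1)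
    filter_upwards [hevLo, hLoT.eventually_const_le
      (sub_one_lt (α * Real.exp (-α) * (↑(n+1):ℝ) * (1 - u) / Real.log 2))]
      with K ha hb
    linarith
  constructor
  · have h := liminf_le_liminf hevLo hLoT.isBoundedUnder_ge hcobF_ge
    rw [hLoT.liminf_eq] at h
    exact h
  · have h := limsup_le_limsup hevUp hcobF_le hUpT.isBoundedUnder_le
    rw [hUpT.limsup_eq] at h
    have heq : α * Real.exp (-(α*(1-u^2))) * (↑(n+1):ℝ) * (1 - u) / Real.log 2
        = α * Real.exp (-α * (1 - u ^ 2)) * (↑(n+1):ℝ) * (1 - u) / Real.log 2 := by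
      rw [neg_mul]
    rw [heq] at h
    exact h
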